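/- Let φ be a permutation of the m rows Q_m. Let S be a valid subset of Q_m × Q_n such that for every column set U ∈ cols(S) the whole equivalence class [U]_φ is contained in cols(S), and such that some V ∈ cols(S) satisfies |[V]_φ| ≥ 2. Assume that every valid subset S′ of Q_{m′} × Q_{n′} with m′ < m, or n′ < n, or |S′| < |S| is reachable in the extremal subset automaton 𝒟_{m′,n′}. Then S is reachable in 𝒟_{m,n}. -/

import Mathlib

/-- The extremal shuffle NFA `𝒩_{m,n}`: its alphabet `Σ_{m,n}` has one letter for
every pair of transformations of `Q_m = Fin m` and `Q_n = Fin n`, its state set is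
`Q_m × Q_n`, its initial state is `(1,1)` (here `(0,0)`), and a letter
`a = (s,t)` takes `(p,q)` to `{(s p, q), (p, t q)}`. -/
def extremalNFA (m n : ℕ) :
    NFA ((Fin m → Fin m) × (Fin n → Fin n)) (Fin m × Fin n) where
  step := fun pq a => {(a.1 pq.1, pq.2), (pq.1, a.2 pq.2)}
  start := {pq | pq.1.val = 0 ∧ pq.2.val = 0}
  accept := ∅

/-- A subset `S ⊆ Q_m × Q_n` is valid if it contains a state in column 1
and a state in row 1 (Condition (C)). -/
def ValidSubset {m n : ℕ} (S : Set (Fin m × Fin n)) : Prop :=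
  (∃ p ∈ S, p.2.val = 0) ∧ (∃ p ∈ S, p.1.val = 0)

/-- `S` is reachable in the subset automaton `𝒟_{m,n}` of the extremal shuffle NFA,
i.e. it is obtained from the initial subset `{(1,1)}` by reading some word. -/
def ReachableIn {m n : ℕ} (S : Set (Fin m × Fin n)) : Prop :=
  ∃ w : List ((Fin m → Fin m) × (Fin n → Fin n)),
    S = (extremalNFA m n).evalFrom (extremalNFA m n).start w

/-- The set of rows appearing in column `j` of `S`. -/
def colSet {m n : ℕ} (S : Set (Fin m × Fin n)) (j : Fin n) : Set (Fin m) :=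
  {i | (i, j) ∈ S}

/-- The collection of column sets of `S`. -/
def colsSet {m n : ℕ} (S : Set (Fin m × Fin n)) : Set (Set (Fin m)) :=
  {U | ∃ j : Fin n, U = colSet S j}

/-- The equivalence class `[U]_φ` of a subset `U ⊆ Q_m` of rows under a
permutation `φ` of the rows. -/
def permClass {m : ℕ} (φ : Equiv.Perm (Fin m)) (U : Set (Fin m)) : Set (Set (Fin m)) :=
  {V | ∃ i : ℕ, V = (⇑(φ ^ i)) '' U}

/-- Let `φ` be a permutation of the `m` rows and let `S` be a valid subset whose
collection of columns is a union of full equivalence classes under `φ`, with at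
least one class of size at least 2. If every valid subset `S'` of `Q_{m'} × Q_{n'}`
with `m' < m`, or `n' < n`, or `|S'| < |S|` is reachable in `𝒟_{m',n'}`,
then `S` is reachable in `𝒟_{m,n}`. -/
lemma reachable_step {m n : ℕ} {T : Set (Fin m × Fin n)} (h : ReachableIn T)
    (a : (Fin m → Fin m) × (Fin n → Fin n)) :
    ReachableIn ((extremalNFA m n).stepSet T a) := by
  obtain ⟨w, hw⟩ := h
  exact ⟨w ++ [a], by rw [NFA.evalFrom_append, NFA.evalFrom_singleton, hw]⟩

theorem stmt_12 {m n : ℕ} (φ : Equiv.Perm (Fin m)) (S : Set (Fin m × Fin n))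
    (hvalid : ValidSubset S)
    (hclosed : ∀ U ∈ colsSet S, permClass φ U ⊆ colsSet S)
    (hbig : ∃ V ∈ colsSet S, 2 ≤ (permClass φ V).ncard)
    (ih : ∀ (m' n' : ℕ) (S' : Set (Fin m' × Fin n')), ValidSubset S' →
      (m' < m ∨ n' < n ∨ S'.ncard < S.ncard) → ReachableIn S') :
    ReachableIn S := by
  classical
  obtain ⟨⟨pc, hpc, hpc0⟩, ⟨pr, hpr, hpr0⟩⟩ := hvalid
  set zr : Fin m := pr.1 with hzr
  set zc : Fin n := pc.2 with hzc
  -- order of φ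
  set o : ℕ := orderOf φ with ho
  have opos : 0 < o := orderOf_pos φ
  have hφo : φ ^ o = 1 := pow_orderOf_eq_one φ
  -- inverse identities via φ^(o-1)
  have hmul1 : φ * φ ^ (o - 1) = 1 := by
    rw [← pow_succ', Nat.sub_add_cancel opos, hφo]
  have hmul2 : φ ^ (o - 1) * φ = 1 := by
    rw [← pow_succ, Nat.sub_add_cancel opos, hφo]
  have ho1 : ∀ x : Fin m, φ ((φ ^ (o - 1)) x) = x := by
    intro x
    rw [← Equiv.Perm.mul_apply, hmul1, Equiv.Perm.one_apply]
  have ho2 : ∀ x : Fin m, (φ ^ (o - 1)) (φ x) = x := by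
    intro x
    rw [← Equiv.Perm.mul_apply, hmul2, Equiv.Perm.one_apply]
  have himg : ∀ (A : Set (Fin m)) (u : Fin m), u ∈ (⇑(φ ^ (o - 1))) '' A ↔ φ u ∈ A := by
    intro A u
    constructor
    · rintro ⟨x, hx, rfl⟩
      rw [ho1]; exact hx
    · intro h
      exact ⟨φ u, h, ho2 u⟩
  -- a set V in cols with φ '' V ≠ V
  have hexV : ∃ V ∈ colsSet S, ⇑φ '' V ≠ V := by
    by_contra hcon
    push_neg at hcon
    obtain ⟨V₀, hV₀, h2⟩ := hbig
    have hall : ∀ i : ℕ, (⇑(φ ^ i)) '' V₀ = V₀ := by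
      intro i
      induction i with
      | zero => simp
      | succ i ihi =>
        have hcoe : (⇑(φ ^ (i + 1)) : Fin m → Fin m) = ⇑φ ∘ ⇑(φ ^ i) := by
          funext x
          rw [Function.comp_apply, ← Equiv.Perm.mul_apply, ← pow_succ']
        rw [hcoe, Set.image_comp, ihi]
        exact hcon V₀ hV₀
    have hsing : permClass φ V₀ = {V₀} := by
      ext X
      constructor
      · rintro ⟨i, rfl⟩
        rw [hall i]; rfl
      · rintro rfl
        exact ⟨0, by simp⟩
    rw [hsing, Set.ncard_singleton] at h2
    omega
  obtain ⟨V, hVmem, hVne⟩ := hexV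
  obtain ⟨j, hj⟩ := hVmem
  -- column with set φ '' V
  have hφVmem : ⇑φ '' V ∈ colsSet S :=
    hclosed V ⟨j, hj⟩ ⟨1, by rw [pow_one]⟩
  obtain ⟨k, hk⟩ := hφVmem
  -- choose ch ≠ zc with non-invariant column set
  have hchoose : ∃ ch : Fin n, ch ≠ zc ∧ ⇑φ '' colSet S ch ≠ colSet S ch := by
    by_cases hj0 : j = zc
    · refine ⟨k, ?_, ?_⟩
      · intro hkzc
        apply hVne
        rw [hk, hkzc, ← hj0, ← hj]
      · rw [← hk]
        intro hcon
        exact hVne (Set.image_injective.mpr φ.injective hcon)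
    · exact ⟨j, hj0, by rw [← hj]; exact hVne⟩
  obtain ⟨ch, hchzc, hnoninv⟩ := hchoose
  -- column b₀ with set φ '' (colSet S ch)
  have hb₀mem : ⇑φ '' colSet S ch ∈ colsSet S :=
    hclosed _ ⟨ch, rfl⟩ ⟨1, by rw [pow_one]⟩
  obtain ⟨b₀, hb₀⟩ := hb₀mem
  have hb₀ch : b₀ ≠ ch := by
    intro h
    rw [h] at hb₀
    exact hnoninv hb₀
  -- τ : route each column to a column with φ⁻¹-shifted set
  have hτex : ∀ b : Fin n, ∃ c : Fin n, (⇑(φ ^ (o - 1))) '' colSet S b = colSet S c := by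
    intro b
    exact hclosed _ ⟨b, rfl⟩ ⟨o - 1, rfl⟩
  choose τ hτ using hτex
  -- choose K and a row-0 witness column
  have hKex : ∃ (K : ℕ) (crow : Fin n), crow ≠ ch ∧ ((φ ^ (K + 1)) zr, crow) ∈ S := by
    by_cases hK : ∃ c : Fin n, c ≠ ch ∧ (zr, c) ∈ S
    · obtain ⟨c, hcch, hc⟩ := hK
      refine ⟨o - 1, c, hcch, ?_⟩
      rw [Nat.sub_add_cancel opos, hφo, Equiv.Perm.one_apply]
      exact hc
    · push_neg at hK
      have hq2 : pr.2 = ch := by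
        by_contra hne
        exact hK pr.2 hne (by rw [hzr]; exact hpr)
      have hzrch : zr ∈ colSet S ch := by
        show (zr, ch) ∈ S
        rw [← hq2, hzr]
        exact hpr
      refine ⟨0, b₀, hb₀ch, ?_⟩
      show (φ ^ (0 + 1)) zr ∈ colSet S b₀
      rw [← hb₀]
      exact ⟨zr, hzrch, by rw [pow_one]⟩
  obtain ⟨K, crow, hcrowch, hcrow⟩ := hKex
  -- the seed set T'
  set T' : Set (Fin m × Fin n) :=
    {p : Fin m × Fin n | p.2 ≠ ch ∧ ((φ ^ (K + 1)) p.1, p.2) ∈ S} with hT'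
  -- T' is valid
  have hT'valid : ValidSubset T' := by
    constructor
    · refine ⟨((φ ^ (K + 1))⁻¹ pc.1, zc), ⟨Ne.symm hchzc, ?_⟩, hpc0⟩
      show ((φ ^ (K + 1)) ((φ ^ (K + 1))⁻¹ pc.1), zc) ∈ S
      rw [Equiv.Perm.inv_def, Equiv.apply_symm_apply]
      show (pc.1, pc.2) ∈ S
      exact hpc
    · exact ⟨(zr, crow), ⟨hcrowch, hcrow⟩, hpr0⟩
  -- T' has smaller cardinality
  have hlt : T'.ncard < S.ncard := by
    set f : Fin m × Fin n → Fin m × Fin n := fun p => ((φ ^ (K + 1)) p.1, p.2) with hf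
    have hfinj : Function.Injective f := by
      intro a b hab
      rw [hf] at hab
      simp only [Prod.mk.injEq] at hab
      exact Prod.ext ((φ ^ (K + 1)).injective hab.1) hab.2
    have himsub : f '' T' ⊂ S := by
      constructor
      · rintro x ⟨p, hp, rfl⟩
        exact hp.2
      · intro hsub
        have hchne : (colSet S ch).Nonempty := by
          by_contra hcon
          rw [Set.not_nonempty_iff_eq_empty] at hcon
          apply hnoninv
          rw [hcon, Set.image_empty]
        obtain ⟨a, ha⟩ := hchne
        have : (a, ch) ∈ f '' T' := hsub ha
        obtain ⟨p, hp, hpe⟩ := this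
        have : p.2 = ch := by
          rw [hf] at hpe
          exact (Prod.mk.injEq _ _ _ _).mp hpe |>.2
        exact hp.1 this
    calc T'.ncard = (f '' T').ncard := (Set.ncard_image_of_injective T' hfinj).symm
      _ < S.ncard := Set.ncard_lt_ncard himsub S.toFinite
  -- T' is reachable
  have hT'reach : ReachableIn T' := ih m n T' hT'valid (Or.inr (Or.inr hlt))
  -- the seed letter
  set t' : Fin n → Fin n := fun b => if b = b₀ then ch else τ b with ht'
  -- seed step: stepSet T' (φ, t') = X K
  have hpow1 : ∀ x : Fin m, (φ ^ (K + 1)) x = (φ ^ K) (φ x) := by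
    intro x
    rw [pow_succ, Equiv.Perm.mul_apply]
  have hpow2 : ∀ x : Fin m, (φ ^ (K + 1)) x = φ ((φ ^ K) x) := by
    intro x
    rw [pow_succ', Equiv.Perm.mul_apply]
  have hseed : (extremalNFA m n).stepSet T' (⇑φ, t')
      = {p : Fin m × Fin n | (⇑(φ ^ K) p.1, p.2) ∈ S} := by
    ext ⟨u1, u2⟩
    rw [NFA.mem_stepSet]
    constructor
    · rintro ⟨⟨p1, p2⟩, hp, hu⟩
      obtain ⟨hp2ch, hpS⟩ := hp
      have hu' : (u1, u2) = ((⇑φ) p1, p2) ∨ (u1, u2) = (p1, t' p2) := hu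
      show ((φ ^ K) u1, u2) ∈ S
      rcases hu' with h | h
      · rw [Prod.mk.injEq] at h
        obtain ⟨h1, h2⟩ := h
        rw [h1, h2, ← hpow1]
        exact hpS
      · rw [Prod.mk.injEq] at h
        obtain ⟨h1, h2⟩ := h
        rw [h1, h2]
        by_cases hb : p2 = b₀
        · have ht'p2 : t' p2 = ch := by rw [ht']; simp [hb]
          rw [ht'p2]
          show (φ ^ K) p1 ∈ colSet S ch
          have hmem : (φ ^ (K + 1)) p1 ∈ colSet S b₀ := by
            show ((φ ^ (K + 1)) p1, b₀) ∈ S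
            rw [← hb]
            exact hpS
          rw [← hb₀] at hmem
          obtain ⟨x, hx, hxe⟩ := hmem
          have : φ x = φ ((φ ^ K) p1) := by rw [hxe, hpow2]
          rwa [← φ.injective this]
        · have ht'p2 : t' p2 = τ p2 := by rw [ht']; simp [hb]
          rw [ht'p2]
          show (φ ^ K) p1 ∈ colSet S (τ p2)
          rw [← hτ p2, himg, ← hpow2]
          exact hpS
    · intro hu
      have hu' : ((φ ^ K) u1, u2) ∈ S := hu
      by_cases hc : u2 = ch
      · refine ⟨(u1, b₀), ⟨hb₀ch, ?_⟩, ?_⟩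
        · show ((φ ^ (K + 1)) u1, b₀) ∈ S
          show (φ ^ (K + 1)) u1 ∈ colSet S b₀
          rw [← hb₀]
          refine ⟨(φ ^ K) u1, ?_, (hpow2 u1).symm⟩
          show ((φ ^ K) u1, ch) ∈ S
          rw [← hc]
          exact hu'
        · right
          show (u1, u2) = (u1, t' b₀)
          rw [ht']
          simp [hc]
      · refine ⟨(φ⁻¹ u1, u2), ⟨hc, ?_⟩, ?_⟩
        · show ((φ ^ (K + 1)) (φ⁻¹ u1), u2) ∈ S
          rw [pow_succ, Equiv.Perm.mul_apply, Equiv.Perm.inv_def, Equiv.apply_symm_apply]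
          exact hu'
        · left
          show (u1, u2) = (φ (φ⁻¹ u1), u2)
          rw [Equiv.Perm.inv_def, Equiv.apply_symm_apply]
  -- the chain of letters (φ, τ)
  have hchain : ∀ k : ℕ, (extremalNFA m n).stepSet
      {p : Fin m × Fin n | (⇑(φ ^ (k + 1)) p.1, p.2) ∈ S} (⇑φ, τ)
      = {p : Fin m × Fin n | (⇑(φ ^ k) p.1, p.2) ∈ S} := by
    intro k
    ext ⟨u1, u2⟩
    rw [NFA.mem_stepSet]
    constructor
    · rintro ⟨⟨p1, p2⟩, hp, hu⟩
      have hpS : ((φ ^ (k + 1)) p1, p2) ∈ S := hp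
      have hu' : (u1, u2) = ((⇑φ) p1, p2) ∨ (u1, u2) = (p1, τ p2) := hu
      show ((φ ^ k) u1, u2) ∈ S
      rcases hu' with h | h
      · rw [Prod.mk.injEq] at h
        obtain ⟨h1, h2⟩ := h
        rw [h1, h2]
        rw [pow_succ, Equiv.Perm.mul_apply] at hpS
        exact hpS
      · rw [Prod.mk.injEq] at h
        obtain ⟨h1, h2⟩ := h
        rw [h1, h2]
        show (φ ^ k) p1 ∈ colSet S (τ p2)
        rw [← hτ p2, himg]
        rw [pow_succ', Equiv.Perm.mul_apply] at hpS
        exact hpS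
    · intro hu
      have hu' : ((φ ^ k) u1, u2) ∈ S := hu
      refine ⟨(φ⁻¹ u1, u2), ?_, ?_⟩
      · show ((φ ^ (k + 1)) (φ⁻¹ u1), u2) ∈ S
        rw [pow_succ, Equiv.Perm.mul_apply, Equiv.Perm.inv_def, Equiv.apply_symm_apply]
        exact hu'
      · left
        show (u1, u2) = (φ (φ⁻¹ u1), u2)
        rw [Equiv.Perm.inv_def, Equiv.apply_symm_apply]
  -- descend the chain
  have hdown : ∀ k : ℕ,
      ReachableIn {p : Fin m × Fin n | (⇑(φ ^ k) p.1, p.2) ∈ S} → ReachableIn S := by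
    intro k
    induction k with
    | zero =>
      intro h
      have he : {p : Fin m × Fin n | (⇑(φ ^ 0) p.1, p.2) ∈ S} = S := by
        ext ⟨a, b⟩
        simp
      rwa [he] at h
    | succ k ihk =>
      intro h
      apply ihk
      have h2 := reachable_step h (⇑φ, τ)
      rwa [hchain k] at h2
  apply hdown K
  rw [← hseed]
  exact reachable_step hT'reach (⇑φ, t')
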